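/- Let X, Y, U be finite subsets of the nonnegative integers with #X = #Y, X and Y having the same sum of elements, and U disjoint from both X and Y. If X ⊴ Y (comparing the elements arranged in decreasing order in the dominance order), then U ∪ X ⊴ U ∪ Y. -/

import Mathlib

/-- Decreasing enumeration of a multiset of natural numbers. -/
def dsort (M : Multiset ℕ) : List ℕ := (M.sort (· ≤ ·)).reverse

/-- Dominance order on multisets of naturals (of the same size and sum):
partial sums of the decreasing enumerations. -/
def MDom (M M' : Multiset ℕ) : Prop :=
  ∀ d, ((dsort M).take d).sum ≤ ((dsort M').take d).sum

/-- top-`d` sum of a multiset of naturals -/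
def tops (d : ℕ) (M : Multiset ℕ) : ℕ := ((dsort M).take d).sum

lemma coe_dsort (M : Multiset ℕ) : ((dsort M : List ℕ) : Multiset ℕ) = M := by
  unfold dsort; rw [Multiset.coe_reverse, Multiset.sort_eq]

lemma sorted_dsort (M : Multiset ℕ) : (dsort M).Pairwise (· ≥ ·) :=
  List.pairwise_reverse.2 (Multiset.pairwise_sort M (· ≤ ·))

lemma dsort_eq {l : List ℕ} {M : Multiset ℕ} (hs : l.Pairwise (· ≥ ·))
    (hm : (l : Multiset ℕ) = M) : dsort M = l :=
  List.Perm.eq_of_pairwise' (sorted_dsort M) hs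
    (Multiset.coe_eq_coe.mp (by rw [coe_dsort, hm]))

lemma tops_mono {k d : ℕ} (h : k ≤ d) (M : Multiset ℕ) : tops k M ≤ tops d M := by
  unfold tops
  calc ((dsort M).take k).sum = (((dsort M).take d).take k).sum := by
        rw [List.take_take, min_eq_left h]
  _ ≤ ((dsort M).take d).sum :=
      (((dsort M).take d).take_sublist k).sum_le_sum (by simp)

/-- The top-`card S` sum of `M` is at least the sum of any sub-multiset `S`. -/
lemma sum_le_tops : ∀ n (S M : Multiset ℕ), S.card = n → S ≤ M → S.sum ≤ tops n M := by
  intro n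
  induction n with
  | zero =>
    intro S M hc _
    rw [Multiset.card_eq_zero.mp hc]
    simp
  | succ n ih =>
    intro S M hc hSM
    -- decompose dsort S = s :: ts
    have hlenS : (dsort S).length = n + 1 := by
      have := congrArg Multiset.card (coe_dsort S)
      simpa [hc] using this
    obtain ⟨s, ts, hSl⟩ : ∃ s ts, dsort S = s :: ts := by
      cases hdl : dsort S with
      | nil => rw [hdl] at hlenS; simp at hlenS
      | cons a l => exact ⟨a, l, rfl⟩
    have hScoe : (↑(s :: ts) : Multiset ℕ) = S := by rw [← hSl, coe_dsort]
    have hsS : s ∈ S := by rw [← hScoe]; simp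
    have hsmax : ∀ x ∈ S, x ≤ s := by
      intro x hx
      rw [← hScoe, Multiset.mem_coe, List.mem_cons] at hx
      rcases hx with rfl | hx
      · exact le_refl x
      · exact List.rel_of_pairwise_cons (hSl ▸ sorted_dsort S) (a' := x) hx
    -- decompose dsort M = m :: tm
    have hMne : M ≠ 0 := by
      intro h0
      rw [h0, Multiset.le_zero] at hSM
      rw [hSM] at hc; simp at hc
    obtain ⟨m, tm, hMl⟩ : ∃ m tm, dsort M = m :: tm := by
      cases hdl : dsort M with
      | nil =>
        exfalso; apply hMne
        rw [← coe_dsort M, hdl]; rfl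
      | cons a l => exact ⟨a, l, rfl⟩
    have hMcoe : (↑(m :: tm) : Multiset ℕ) = M := by rw [← hMl, coe_dsort]
    have hmM : m ∈ M := by rw [← hMcoe]; simp
    have hmmax : ∀ x ∈ M, x ≤ m := by
      intro x hx
      rw [← hMcoe, Multiset.mem_coe, List.mem_cons] at hx
      rcases hx with rfl | hx
      · exact le_refl x
      · exact List.rel_of_pairwise_cons (hMl ▸ sorted_dsort M) (a' := x) hx
    have hsm : s ≤ m := hmmax s (Multiset.mem_of_le hSM hsS)
    -- erase the maxima
    have hkey : S.erase s ≤ M.erase m := by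
      rw [Multiset.le_iff_count]
      intro x
      have hcnt := Multiset.le_iff_count.mp hSM
      by_cases hxs : x = s
      · subst hxs
        by_cases hxm : x = m
        · subst hxm
          rw [Multiset.count_erase_self, Multiset.count_erase_self]
          exact Nat.sub_le_sub_right (hcnt x) 1
        · rw [Multiset.count_erase_self, Multiset.count_erase_of_ne hxm]
          exact le_trans (Nat.sub_le _ _) (hcnt x)
      · rw [Multiset.count_erase_of_ne hxs]
        by_cases hxm : x = m
        · subst hxm
          rw [Multiset.count_erase_self]
          have hx0 : Multiset.count x S = 0 := by
            by_contra hne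
            have : x ∈ S := Multiset.count_pos.mp (Nat.pos_of_ne_zero hne)
            exact hxs (le_antisymm (hsmax x this) (le_trans hsm (le_of_eq rfl)) |>.symm ▸ rfl)
          rw [hx0]; exact Nat.zero_le _
        · rw [Multiset.count_erase_of_ne hxm]
          exact hcnt x
    have hcard' : (S.erase s).card = n := by
      rw [Multiset.card_erase_of_mem hsS, hc]; rfl
    have ihh := ih (S.erase s) (M.erase m) hcard' hkey
    -- tops (n+1) M = m + tops n (M.erase m)
    have htm : dsort (M.erase m) = tm := by
      apply dsort_eq ((hMl ▸ sorted_dsort M).of_cons)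
      rw [← hMcoe]
      exact (Multiset.erase_cons_head m ↑tm).symm ▸ rfl
    have htops : tops (n + 1) M = m + tops n (M.erase m) := by
      unfold tops
      rw [hMl, htm, List.take_succ_cons, List.sum_cons]
    have hsum : S.sum = s + (S.erase s).sum := (Multiset.sum_erase hsS).symm
    rw [hsum, htops]
    exact Nat.add_le_add hsm ihh

/-- The top-`d` sum is achieved by a sub-multiset of card at most `d`. -/
lemma exists_tops (d : ℕ) (M : Multiset ℕ) :
    ∃ S : Multiset ℕ, S ≤ M ∧ S.card ≤ d ∧ S.sum = tops d M := by
  refine ⟨((dsort M).take d : List ℕ), ?_, ?_, ?_⟩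
  · have : (((dsort M).take d : List ℕ) : Multiset ℕ) ≤ ↑(dsort M) :=
      Multiset.coe_le.mpr ((dsort M).take_sublist d).subperm
    rwa [coe_dsort] at this
  · simp
  · exact Multiset.sum_coe _

theorem dominance_union_disjoint (X Y U : Finset ℕ)
    (hcard : X.card = Y.card)
    (hsum : ∑ x ∈ X, x = ∑ y ∈ Y, y)
    (hUX : Disjoint U X) (hUY : Disjoint U Y)
    (h : MDom X.val Y.val) :
    MDom (U ∪ X).val (U ∪ Y).val := by
  have hvalX : (U ∪ X).val = U.val + X.val := by
    rw [← Finset.disjUnion_eq_union U X hUX]; rfl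
  have hvalY : (U ∪ Y).val = U.val + Y.val := by
    rw [← Finset.disjUnion_eq_union U Y hUY]; rfl
  intro d
  show tops d (U ∪ X).val ≤ tops d (U ∪ Y).val
  rw [hvalX, hvalY]
  obtain ⟨S, hSle, hScard, hSsum⟩ := exists_tops d (U.val + X.val)
  rw [← hSsum]
  set S1 := S ⊓ U.val with hS1def
  set S2 := S - U.val with hS2def
  have hsplit : S1 + S2 = S := by
    ext x; simp [hS1def, hS2def, Multiset.count_inter, Multiset.count_sub]; omega
  have hS1 : S1 ≤ U.val := inf_le_right
  have hS2 : S2 ≤ X.val := by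
    rw [hS2def, tsub_le_iff_right]
    rwa [add_comm] at hSle
  have hcards : S1.card + S2.card ≤ d := by
    rw [← Multiset.card_add, hsplit]; exact hScard
  have h1 : S1.sum ≤ tops S1.card U.val := sum_le_tops _ _ _ rfl hS1
  have h2 : S2.sum ≤ tops S2.card X.val := sum_le_tops _ _ _ rfl hS2
  have h2' : tops S2.card X.val ≤ tops S2.card Y.val := h S2.card
  -- combine on the Y side
  obtain ⟨T1, hT1le, hT1card, hT1sum⟩ := exists_tops S1.card U.val
  obtain ⟨T2, hT2le, hT2card, hT2sum⟩ := exists_tops S2.card Y.val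
  have hTle : T1 + T2 ≤ U.val + Y.val := add_le_add hT1le hT2le
  have hTcard : (T1 + T2).card ≤ d := by
    rw [Multiset.card_add]
    exact le_trans (Nat.add_le_add hT1card hT2card) hcards
  have hfin : (T1 + T2).sum ≤ tops d (U.val + Y.val) :=
    le_trans (sum_le_tops _ _ _ rfl hTle) (tops_mono hTcard _)
  calc S.sum = S1.sum + S2.sum := by rw [← hsplit, Multiset.sum_add]
  _ ≤ tops S1.card U.val + tops S2.card Y.val :=
      Nat.add_le_add h1 (le_trans h2 h2')
  _ = (T1 + T2).sum := by rw [Multiset.sum_add, hT1sum, hT2sum]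
  _ ≤ tops d (U.val + Y.val) := hfin
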